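/- Let (k,l,m) be an admissible triple, i.e. k = l + m - 2r with 0 ≤ r ≤ min(l,m), and let q ∈ (0,1) with q + q^{-1} = N ≥ 3. Define the theta-net θ_q(k,l,m) = ([r]_q! [l-r]_q! [m-r]_q! [k+r+1]_q!) / ([l]_q! [m]_q! [k]_q!). Then N^r [k+1]_q / θ_q(k,l,m) = 1 + O(1/N²) as N → ∞, i.e. there is a constant C (depending on k,l,m) with |N^r [k+1]_q / θ_q(k,l,m) - 1| ≤ C/N² for all N ≥ 3. -/

import Mathlib

open Polynomial

/-- Quantum integer `[k]_q = (q^{-k} - q^k)/(q^{-1} - q)`. -/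
noncomputable def qint (q : ℝ) (k : ℕ) : ℝ := (q⁻¹ ^ k - q ^ k) / (q⁻¹ - q)

/-- Quantum factorial `[n]_q!`. -/
noncomputable def qfact (q : ℝ) (n : ℕ) : ℝ := ∏ j ∈ Finset.range n, qint q (j + 1)

/-- The quantum parameter `q = (2/N)/(1 + √(1-4/N²))`, the solution of `q + q⁻¹ = N` in `(0,1)`. -/
noncomputable def qpar (N : ℝ) : ℝ := (2 / N) / (1 + Real.sqrt (1 - 4 / N ^ 2))

/-- Theta net `θ_q(k,l,m)` for an admissible triple `k = l + m - 2r`. -/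
noncomputable def thetaNet (q : ℝ) (k l m r : ℕ) : ℝ :=
  qfact q r * qfact q (l - r) * qfact q (m - r) * qfact q (k + r + 1) /
    (qfact q l * qfact q m * qfact q k)

/-! ### Auxiliary development -/

lemma qinv_gt {q : ℝ} (hq0 : 0 < q) (hq1 : q < 1) : 1 < q⁻¹ := (one_lt_inv₀ hq0).2 hq1

lemma qden_pos {q : ℝ} (hq0 : 0 < q) (hq1 : q < 1) : 0 < q⁻¹ - q := by
  have := qinv_gt hq0 hq1; linarith

lemma qint_zero (q : ℝ) : qint q 0 = 0 := by simp [qint]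

lemma qint_one {q : ℝ} (hq0 : 0 < q) (hq1 : q < 1) : qint q 1 = 1 := by
  rw [qint, pow_one, pow_one, div_self (qden_pos hq0 hq1).ne']

lemma qint_rec {q : ℝ} (hq0 : 0 < q) (n : ℕ) :
    qint q (n+2) = (q + q⁻¹) * qint q (n+1) - qint q n := by
  have h1 : q * q⁻¹ = 1 := mul_inv_cancel₀ hq0.ne'
  rw [qint, qint, qint, ← mul_div_assoc, div_sub_div_same]
  congr 1
  linear_combination (q ^ n - q⁻¹ ^ n) * h1

lemma qint_ge {q : ℝ} (hq0 : 0 < q) (hq1 : q < 1) (n : ℕ) : (q⁻¹) ^ n ≤ qint q (n + 1) := by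
  rw [qint, le_div_iff₀ (qden_pos hq0 hq1)]
  have hqx : q ≤ q⁻¹ := le_of_lt (hq1.trans (qinv_gt hq0 hq1))
  have h1 : q ^ n ≤ q⁻¹ ^ n := pow_le_pow_left₀ hq0.le hqx n
  have h2 : q ^ n * q ≤ q⁻¹ ^ n * q := mul_le_mul_of_nonneg_right h1 hq0.le
  rw [pow_succ, pow_succ]
  nlinarith

lemma qint_pos {q : ℝ} (hq0 : 0 < q) (hq1 : q < 1) (n : ℕ) : 0 < qint q (n + 1) :=
  lt_of_lt_of_le (pow_pos (lt_trans zero_lt_one (qinv_gt hq0 hq1)) n) (qint_ge hq0 hq1 n)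

lemma qfact_pos {q : ℝ} (hq0 : 0 < q) (hq1 : q < 1) (n : ℕ) : 0 < qfact q n :=
  Finset.prod_pos fun j _ => qint_pos hq0 hq1 j

lemma qfact_ge {q : ℝ} (hq0 : 0 < q) (hq1 : q < 1) {c : ℝ} (hc : 0 ≤ c) (hcx : c ≤ q⁻¹)
    (n : ℕ) : c ^ (∑ j ∈ Finset.range n, j) ≤ qfact q n := by
  rw [qfact, ← Finset.prod_pow_eq_pow_sum]
  apply Finset.prod_le_prod
  · intros; positivity
  · intro j _
    exact le_trans (pow_le_pow_left₀ hc hcx j) (qint_ge hq0 hq1 j)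

lemma qpar_facts {N : ℝ} (hN : 3 ≤ N) :
    0 < qpar N ∧ qpar N < 1 ∧ qpar N + (qpar N)⁻¹ = N := by
  have hN0 : 0 < N := by linarith
  set s := Real.sqrt (1 - 4 / N ^ 2) with hs
  have hNsq : (9:ℝ) ≤ N ^ 2 := by nlinarith
  have harg : 0 ≤ 1 - 4 / N ^ 2 := by
    have : 4 / N ^ 2 ≤ 4 / 9 := by
      apply div_le_div_of_nonneg_left (by norm_num) (by norm_num) hNsq
    linarith
  have hs0 : 0 ≤ s := Real.sqrt_nonneg _
  have hs2 : s ^ 2 = 1 - 4 / N ^ 2 := Real.sq_sqrt harg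
  have hs2' : N ^ 2 * s ^ 2 = N ^ 2 - 4 := by
    rw [hs2]; field_simp
  have h4pos : 0 < 4 / N ^ 2 := by positivity
  have hs1 : s < 1 := by nlinarith [hs2]
  have h1s : 0 < 1 + s := by linarith
  have hq0 : 0 < qpar N := by
    rw [qpar]; positivity
  have hq1 : qpar N < 1 := by
    rw [qpar, div_lt_one h1s]
    have : 2 / N ≤ 2 / 3 := by
      apply div_le_div_of_nonneg_left (by norm_num) (by norm_num) hN
    linarith
  refine ⟨hq0, hq1, ?_⟩
  have hqne : qpar N ≠ 0 := hq0.ne'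
  rw [qpar] at hqne ⊢
  have ht : (Real.sqrt (N ^ 2 - 4)) ^ 2 = N ^ 2 - 4 := Real.sq_sqrt (by nlinarith)
  field_simp at hqne ⊢
  have ht2 : N ^ 2 * (Real.sqrt ((N ^ 2 - 4) / N ^ 2)) ^ 2 = N ^ 2 - 4 := by
    rw [Real.sq_sqrt (div_nonneg (by nlinarith) (by positivity))]; field_simp [hN0.ne']
  nlinarith [ht, ht2]

/-- Chebyshev-like polynomials: `chp n` evaluated at `N = q + q⁻¹` gives `[n]_q`. -/
noncomputable def chp : ℕ → Polynomial ℝ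
  | 0 => 0
  | 1 => 1
  | (n+2) => Polynomial.X * chp (n+1) - chp n

noncomputable def Qf (n : ℕ) : Polynomial ℝ := ∏ j ∈ Finset.range n, chp (j+1)

/-- Parity-support predicate. -/
def Par (p : Polynomial ℝ) (d : ℕ) : Prop := ∀ j, j % 2 ≠ d % 2 → p.coeff j = 0

lemma par_mul {p q : Polynomial ℝ} {d e : ℕ} (hp : Par p d) (hq : Par q e) :
    Par (p * q) (d + e) := by
  intro j hj
  rw [Polynomial.coeff_mul]
  apply Finset.sum_eq_zero
  rintro ⟨x, y⟩ hxy
  rw [Finset.HasAntidiagonal.mem_antidiagonal] at hxy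
  by_cases hx : x % 2 = d % 2
  · have hy : y % 2 ≠ e % 2 := by omega
    simp [hq y hy]
  · simp [hp x hx]

lemma par_X_pow (r : ℕ) : Par (Polynomial.X ^ r : Polynomial ℝ) r := by
  intro j hj
  have : j ≠ r := by omega
  simp [coeff_X_pow, this]

lemma chp_spec : ∀ n : ℕ, (chp (n+1)).Monic ∧ (chp (n+1)).natDegree = n ∧ Par (chp (n+1)) n
  | 0 => by
      refine ⟨monic_one, natDegree_one, ?_⟩
      intro j hj
      have : j ≠ 0 := by omega
      show (1:Polynomial ℝ).coeff j = 0
      simp [coeff_one, this]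
  | 1 => by
      have h2 : chp 2 = Polynomial.X := by
        show Polynomial.X * 1 - 0 = Polynomial.X
        ring
      rw [h2]
      refine ⟨monic_X, natDegree_X, ?_⟩
      intro j hj
      have : j ≠ 1 := by omega
      simp [coeff_X, this, Ne.symm this]
  | (n+2) => by
      obtain ⟨h1m, h1d, h1p⟩ := chp_spec (n+1)
      obtain ⟨h0m, h0d, h0p⟩ := chp_spec n
      have heq : chp (n+3) = Polynomial.X * chp (n+2) - chp (n+1) := rfl
      have hXm : (Polynomial.X * chp (n+2)).Monic := monic_X.mul h1m
      have hXd : (Polynomial.X * chp (n+2)).natDegree = n + 2 := by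
        rw [monic_X.natDegree_mul h1m, natDegree_X, h1d]; omega
      have hdlt : (chp (n+1)).degree < (Polynomial.X * chp (n+2)).degree := by
        rw [degree_eq_natDegree h0m.ne_zero, degree_eq_natDegree hXm.ne_zero, hXd, h0d]
        exact_mod_cast by omega
      constructor
      · rw [heq, sub_eq_add_neg]
        exact hXm.add_of_left (by rwa [degree_neg])
      constructor
      · rw [heq, natDegree_sub_eq_left_of_natDegree_lt, hXd]
        rw [hXd, h0d]; omega
      · intro j hj
        rw [heq, coeff_sub]
        have hc1 : (Polynomial.X * chp (n+2)).coeff j = 0 := by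
          cases j with
          | zero => simp
          | succ i =>
              rw [coeff_X_mul]
              exact h1p i (by omega)
        have hc0 : (chp (n+1)).coeff j = 0 := h0p j (by omega)
        rw [hc1, hc0, sub_zero]

lemma Qf_monic (n : ℕ) : (Qf n).Monic :=
  monic_prod_of_monic _ _ fun j _ => (chp_spec j).1

lemma Qf_natDegree (n : ℕ) : (Qf n).natDegree = ∑ j ∈ Finset.range n, j := by
  rw [Qf, natDegree_prod_of_monic _ _ fun j _ => (chp_spec j).1]
  exact Finset.sum_congr rfl fun j _ => (chp_spec j).2.1

lemma Qf_par (n : ℕ) : Par (Qf n) (∑ j ∈ Finset.range n, j) := by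
  induction n with
  | zero =>
      intro j hj
      rw [Finset.range_zero, Finset.sum_empty] at hj
      have : j ≠ 0 := by omega
      simp [Qf, coeff_one, this]
  | succ n ih =>
      rw [Qf, Finset.prod_range_succ, ← Qf, Finset.sum_range_succ]
      exact par_mul ih (chp_spec n).2.2

lemma sum_range_id_sq (n : ℕ) : 2 * (∑ j ∈ Finset.range n, j) + n = n * n := by
  induction n with
  | zero => simp
  | succ n ih =>
      rw [Finset.sum_range_succ]
      ring_nf
      ring_nf at ih
      omega

lemma chp_eval {q N : ℝ} (hq0 : 0 < q) (hq1 : q < 1) (hsum : q + q⁻¹ = N) :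
    ∀ n, (chp n).eval N = qint q n
  | 0 => by
      show (0 : Polynomial ℝ).eval N = _
      rw [qint_zero]; simp
  | 1 => by
      show (1 : Polynomial ℝ).eval N = _
      rw [qint_one hq0 hq1]; simp
  | (n+2) => by
      have h1 := chp_eval hq0 hq1 hsum (n+1)
      have h0 := chp_eval hq0 hq1 hsum n
      show (Polynomial.X * chp (n+1) - chp n).eval N = _
      rw [eval_sub, eval_mul, eval_X, h1, h0, qint_rec hq0 n, hsum]

lemma Qf_eval {q N : ℝ} (hq0 : 0 < q) (hq1 : q < 1) (hsum : q + q⁻¹ = N) (n : ℕ) :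
    (Qf n).eval N = qfact q n := by
  rw [Qf, qfact, Polynomial.eval_prod]
  exact Finset.prod_congr rfl fun j _ => chp_eval hq0 hq1 hsum (j+1)

lemma eval_abs_le (p : Polynomial ℝ) (D : ℕ) (h : ∀ j ∈ p.support, j ≤ D)
    (x : ℝ) (hx : 1 ≤ x) :
    |p.eval x| ≤ (∑ j ∈ p.support, |p.coeff j|) * x ^ D := by
  have hx0 : 0 < x := lt_of_lt_of_le zero_lt_one hx
  rw [Polynomial.eval_eq_sum, Polynomial.sum_def]
  calc |∑ j ∈ p.support, p.coeff j * x ^ j|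
      ≤ ∑ j ∈ p.support, |p.coeff j * x ^ j| := Finset.abs_sum_le_sum_abs _ _
    _ ≤ ∑ j ∈ p.support, |p.coeff j| * x ^ D := by
        apply Finset.sum_le_sum
        intro j hj
        rw [abs_mul, abs_pow, abs_of_pos hx0]
        exact mul_le_mul_of_nonneg_left (pow_le_pow_right₀ hx (h j hj)) (abs_nonneg _)
    _ = (∑ j ∈ p.support, |p.coeff j|) * x ^ D := (Finset.sum_mul _ _ _).symm

theorem stmt_5 (k l m r : ℕ) (hr : r ≤ min l m) (hk : k + 2 * r = l + m) :
    ∃ C : ℝ, ∀ N : ℕ, 3 ≤ N →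
      |(N : ℝ) ^ r * qint (qpar N) (k + 1) / thetaNet (qpar N) k l m r - 1|
        ≤ C / (N : ℝ) ^ 2 := by
  obtain ⟨a, ha⟩ : ∃ a, l = r + a := ⟨l - r, by omega⟩
  obtain ⟨b, hb⟩ : ∃ b, m = r + b := ⟨m - r, by omega⟩
  have hk' : k = a + b := by omega
  subst ha hb hk'
  set S : ℕ → ℕ := fun n => ∑ j ∈ Finset.range n, j with hS
  set Dn : ℕ := S r + S a + S b + S (a + b + r + 1) with hDn
  set Num : Polynomial ℝ :=
    Polynomial.X ^ r * chp (a + b + 1) * Qf (r + a) * Qf (r + b) * Qf (a + b) with hNum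
  set Den : Polynomial ℝ := Qf r * Qf a * Qf b * Qf (a + b + r + 1) with hDenP
  -- monicity
  have m0 : (Polynomial.X ^ r : Polynomial ℝ).Monic := monic_X_pow r
  have m1 : (chp (a + b + 1)).Monic := (chp_spec (a + b)).1
  have hNm : Num.Monic :=
    (((m0.mul m1).mul (Qf_monic _)).mul (Qf_monic _)).mul (Qf_monic _)
  have hDm : Den.Monic :=
    (((Qf_monic r).mul (Qf_monic a)).mul (Qf_monic b)).mul (Qf_monic _)
  -- degrees
  have hNd0 : Num.natDegree = r + (a + b) + S (r + a) + S (r + b) + S (a + b) := by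
    rw [hNum, (((m0.mul m1).mul (Qf_monic _)).mul (Qf_monic _)).natDegree_mul (Qf_monic _),
      ((m0.mul m1).mul (Qf_monic _)).natDegree_mul (Qf_monic _),
      (m0.mul m1).natDegree_mul (Qf_monic _),
      m0.natDegree_mul m1, natDegree_X_pow, (chp_spec (a + b)).2.1,
      Qf_natDegree, Qf_natDegree, Qf_natDegree]
  have hDd : Den.natDegree = Dn := by
    rw [hDenP, (((Qf_monic r).mul (Qf_monic a)).mul (Qf_monic b)).natDegree_mul (Qf_monic _),
      ((Qf_monic r).mul (Qf_monic a)).natDegree_mul (Qf_monic b),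
      (Qf_monic r).natDegree_mul (Qf_monic a),
      Qf_natDegree, Qf_natDegree, Qf_natDegree, Qf_natDegree, hDn]
  -- the degree identity
  have harith : r + (a + b) + S (r + a) + S (r + b) + S (a + b) = Dn := by
    have H : ∀ n : ℕ, 2 * ((S n : ℕ) : ℤ) + (n : ℤ) = (n : ℤ) * n := by
      intro n; exact_mod_cast sum_range_id_sq n
    have h1 := H (r + a); have h2 := H (r + b); have h3 := H (a + b)
    have h4 := H r; have h5 := H a; have h6 := H b; have h7 := H (a + b + r + 1)
    push_cast at h1 h2 h3 h4 h5 h6 h7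
    have key : 2 * ((r + (a + b) + S (r + a) + S (r + b) + S (a + b) : ℕ) : ℤ)
        = 2 * ((Dn : ℕ) : ℤ) := by
      rw [hDn]
      push_cast
      linear_combination h1 + h2 + h3 - h4 - h5 - h6 - h7
    have key' : 2 * (r + (a + b) + S (r + a) + S (r + b) + S (a + b))
        = 2 * Dn := by exact_mod_cast key
    omega
  have hNd : Num.natDegree = Dn := by rw [hNd0, harith]
  -- parity
  have hNp : Par Num Dn := by
    have := par_mul (par_mul (par_mul (par_mul (par_X_pow r) (chp_spec (a + b)).2.2)
      (Qf_par (r + a))) (Qf_par (r + b))) (Qf_par (a + b))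
    rw [← hNum] at this
    rwa [show r + (a + b) + S (r + a) + S (r + b) + S (a + b) = Dn from harith] at this
  have hDp : Par Den Dn := by
    have := par_mul (par_mul (par_mul (Qf_par r) (Qf_par a)) (Qf_par b))
      (Qf_par (a + b + r + 1))
    rw [← hDenP] at this
    rwa [← hDn] at this
  -- support bound
  have hsupp : ∀ j ∈ (Num - Den).support, j + 2 ≤ Dn := by
    intro j hj
    have hnz := Polynomial.mem_support_iff.1 hj
    rw [Polynomial.coeff_sub] at hnz
    have h1 : ¬ Dn < j := by
      intro h
      apply hnz
      rw [coeff_eq_zero_of_natDegree_lt (hNd ▸ h), coeff_eq_zero_of_natDegree_lt (hDd ▸ h),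
        sub_zero]
    have h2 : j ≠ Dn := by
      intro h
      rw [h] at hnz
      have c1 : Num.coeff Dn = 1 := by rw [← hNd]; exact hNm.coeff_natDegree
      have c2 : Den.coeff Dn = 1 := by rw [← hDd]; exact hDm.coeff_natDegree
      rw [c1, c2, sub_self] at hnz
      exact hnz rfl
    have h3 : j % 2 = Dn % 2 := by
      by_contra h
      exact hnz (by rw [hNp j h, hDp j h, sub_zero])
    omega
  -- the constant
  refine ⟨(∑ j ∈ (Num - Den).support, |(Num - Den).coeff j|) / ((2/3 : ℝ)) ^ Dn, ?_⟩
  intro N hN3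
  set Nr : ℝ := (N : ℝ) with hNr
  have hN3' : (3 : ℝ) ≤ Nr := by rw [hNr]; exact_mod_cast hN3
  have hN1 : (1 : ℝ) ≤ Nr := by linarith
  obtain ⟨hq0, hq1, hsum⟩ := qpar_facts hN3'
  set q : ℝ := qpar Nr with hqdef
  have hcx : (2/3 : ℝ) * Nr ≤ q⁻¹ := by
    have : q⁻¹ = Nr - q := by linarith [hsum]
    rw [this]; linarith
  have h23N : (0:ℝ) < (2/3 : ℝ) * Nr := by linarith
  have hqf : ∀ n, 0 < qfact q n := qfact_pos hq0 hq1
  -- evaluations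
  have hNumEval : Num.eval Nr
      = Nr ^ r * qint q (a + b + 1) * qfact q (r + a) * qfact q (r + b) * qfact q (a + b) := by
    rw [hNum]
    simp only [eval_mul, eval_pow, eval_X]
    rw [chp_eval hq0 hq1 hsum, Qf_eval hq0 hq1 hsum, Qf_eval hq0 hq1 hsum,
      Qf_eval hq0 hq1 hsum]
  have hDenEval : Den.eval Nr
      = qfact q r * qfact q a * qfact q b * qfact q (a + b + r + 1) := by
    rw [hDenP]
    simp only [eval_mul]
    rw [Qf_eval hq0 hq1 hsum, Qf_eval hq0 hq1 hsum, Qf_eval hq0 hq1 hsum,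
      Qf_eval hq0 hq1 hsum]
  -- lower bound on denominator
  have hb2 : ((2/3 : ℝ) * Nr) ^ Dn ≤ Den.eval Nr := by
    rw [hDenEval, hDn, pow_add, pow_add, pow_add]
    have g1 := qfact_ge hq0 hq1 h23N.le hcx r
    have g2 := qfact_ge hq0 hq1 h23N.le hcx a
    have g3 := qfact_ge hq0 hq1 h23N.le hcx b
    have g4 := qfact_ge hq0 hq1 h23N.le hcx (a + b + r + 1)
    have p1 : (0:ℝ) ≤ ((2/3 : ℝ) * Nr) ^ (S r) := by positivity
    have p2 : (0:ℝ) ≤ ((2/3 : ℝ) * Nr) ^ (S a) := by positivity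
    have p3 : (0:ℝ) ≤ ((2/3 : ℝ) * Nr) ^ (S b) := by positivity
    have p4 : (0:ℝ) ≤ ((2/3 : ℝ) * Nr) ^ (S (a + b + r + 1)) := by positivity
    have t1 : ((2/3 : ℝ) * Nr) ^ (S r) * ((2/3 : ℝ) * Nr) ^ (S a)
        ≤ qfact q r * qfact q a := mul_le_mul g1 g2 p2 (hqf r).le
    have t2 := mul_le_mul t1 g3 p3 (mul_pos (hqf r) (hqf a)).le
    exact mul_le_mul t2 g4 p4 (mul_pos (mul_pos (hqf r) (hqf a)) (hqf b)).le
  have hDpos : 0 < Den.eval Nr := lt_of_lt_of_le (by positivity) hb2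
  -- the key algebraic identity
  have hkey : Nr ^ r * qint q (a + b + 1) / thetaNet q (a + b) (r + a) (r + b) r - 1
      = (Num - Den).eval Nr / Den.eval Nr := by
    rw [Polynomial.eval_sub, hNumEval, hDenEval, thetaNet]
    have e1 : r + a - r = a := by omega
    have e2 : r + b - r = b := by omega
    rw [e1, e2]
    have n1 := (hqf r).ne'
    have n2 := (hqf a).ne'
    have n3 := (hqf b).ne'
    have n4 := (hqf (a + b + r + 1)).ne'
    have n5 := (hqf (r + a)).ne'
    have n6 := (hqf (r + b)).ne'
    have n7 := (hqf (a + b)).ne'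
    field_simp
  rw [hkey, abs_div, abs_of_pos hDpos]
  -- numerator bound
  have hb1 : |(Num - Den).eval Nr|
      ≤ (∑ j ∈ (Num - Den).support, |(Num - Den).coeff j|) * Nr ^ (Dn - 2) :=
    eval_abs_le _ _ (fun j hj => by have := hsupp j hj; omega) Nr hN1
  set Sa : ℝ := ∑ j ∈ (Num - Den).support, |(Num - Den).coeff j| with hSa
  have hSa0 : 0 ≤ Sa := Finset.sum_nonneg fun j _ => abs_nonneg _
  calc |(Num - Den).eval Nr| / Den.eval Nr
      ≤ (Sa * Nr ^ (Dn - 2)) / (((2/3 : ℝ) * Nr) ^ Dn) := by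
        apply div_le_div₀ (by positivity) hb1 (by positivity) hb2
    _ ≤ Sa / ((2/3 : ℝ)) ^ Dn / Nr ^ 2 := by
        rcases Finset.eq_empty_or_nonempty (Num - Den).support with hs | hs
        · have : Sa = 0 := by rw [hSa, hs]; simp
          rw [this]
          simp
        · obtain ⟨j, hj⟩ := hs
          have hD2 : 2 ≤ Dn := le_trans (by omega) (hsupp j hj)
          have hpow : Nr ^ Dn = Nr ^ (Dn - 2) * Nr ^ 2 := by
            rw [← pow_add]; congr 1; omega
          apply le_of_eq
          rw [mul_pow, hpow]
          have hNr0 : Nr ≠ 0 := by linarith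
          field_simp
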